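/- arXiv:2510.03850 — 2 statements merged into one kernel-verified Lean document; each statement's English description precedes it below -/
import Mathlib

section
/- Let μ, r̂ > 0, 0 < α < 1, and let L ≥ 1 be an integer. Then for every r > 0, ∑_{i=0}^∞ |δ_i| · r^{αi + αμL − 1} / Γ(αi + αμL) < r^{αμL − 1} · Γ(αμ)^L · ∑_{i=0}^∞ (2·μ·L·Γ(α(1+μ))·(r/r̂)^α)^i / Γ(iα + αμL), where the series on the right-hand side is the Mittag-Leffler series E_{α, αμL}(2·μ·L·(r/r̂)^α·Γ(α(1+μ))) and both series converge. -/
open MeasureTheory Real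

section AuxGamma
open Set

lemma gamma_ge_one_of_le_one {z : ℝ} (h0 : 0 < z) (h1 : z ≤ 1) : 1 ≤ Real.Gamma z := by
  have hconv := Real.convexOn_Gamma
  have hz : z ∈ Ioi (0:ℝ) := h0
  have h2 : (2:ℝ) ∈ Ioi (0:ℝ) := by norm_num
  set a : ℝ := 1/(2-z) with ha
  have hzlt : z < 2 := by linarith
  have hne : (2:ℝ) - z ≠ 0 := by linarith
  have ha0 : 0 < a := by rw [ha]; exact div_pos one_pos (by linarith)
  have ha1 : a ≤ 1 := by
    rw [ha, div_le_one (by linarith)]; linarith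
  have hb0 : (0:ℝ) ≤ 1 - a := by linarith
  have hcomb : a * z + (1-a) * 2 = 1 := by
    rw [ha]; field_simp; ring
  have := hconv.2 hz h2 (le_of_lt ha0) hb0 (by ring)
  rw [smul_eq_mul, smul_eq_mul, smul_eq_mul, smul_eq_mul, hcomb, Real.Gamma_one] at this
  have hG2 : Real.Gamma 2 = 1 := Real.Gamma_two
  rw [hG2] at this
  nlinarith [this]

lemma gamma_ge_one_of_ge_two {z : ℝ} (h2 : 2 ≤ z) : 1 ≤ Real.Gamma z := by
  rcases eq_or_lt_of_le h2 with h|h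
  · rw [← h, Real.Gamma_two]
  have hconv := Real.convexOn_Gamma
  have h1 : (1:ℝ) ∈ Ioi (0:ℝ) := by norm_num
  have hz : z ∈ Ioi (0:ℝ) := by simp; linarith
  set b : ℝ := 1/(z-1) with hb
  have hne : z - 1 ≠ 0 := by linarith
  have hb0 : 0 < b := by rw [hb]; exact div_pos one_pos (by linarith)
  have hb1 : b ≤ 1 := by rw [hb, div_le_one (by linarith)]; linarith
  have ha0 : (0:ℝ) ≤ 1 - b := by linarith
  have hcomb : (1-b) * 1 + b * z = 2 := by
    rw [hb]; field_simp; ring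
  have := hconv.2 h1 hz ha0 (le_of_lt hb0) (by ring)
  rw [smul_eq_mul, smul_eq_mul, smul_eq_mul, smul_eq_mul, hcomb, Real.Gamma_one,
    Real.Gamma_two] at this
  nlinarith [this]

lemma gamma_gt_half {z : ℝ} (h0 : 0 < z) : 1/2 < Real.Gamma z := by
  rcases le_or_gt z 1 with h|h
  · linarith [gamma_ge_one_of_le_one h0 h]
  rcases le_or_gt 2 z with h2|h2
  · linarith [gamma_ge_one_of_ge_two h2]
  · have hz1 : (1:ℝ) ≤ Real.Gamma (z+1) := gamma_ge_one_of_ge_two (by linarith)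
    have := Real.Gamma_add_one (ne_of_gt h0)
    have hGz : Real.Gamma z = Real.Gamma (z+1) / z := by
      rw [this]; field_simp
    rw [hGz]
    rw [lt_div_iff₀ h0]
    nlinarith

lemma gamma_ge_sub_one {z : ℝ} (h3 : 3 ≤ z) : z - 1 ≤ Real.Gamma z := by
  have hG3 : Real.Gamma 3 = 2 := by
    have : Real.Gamma (2+1) = 2 * Real.Gamma 2 := Real.Gamma_add_one (by norm_num)
    norm_num [Real.Gamma_two] at this
    norm_num [this]
  rcases eq_or_lt_of_le h3 with h|h
  · rw [← h]
    norm_num [hG3]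
  have hconv := Real.convexOn_Gamma
  have h2 : (2:ℝ) ∈ Ioi (0:ℝ) := by norm_num
  have hz : z ∈ Ioi (0:ℝ) := by simp; linarith
  set b : ℝ := 1/(z-2) with hb
  have hne : z - 2 ≠ 0 := by linarith
  have hb0 : 0 < b := by rw [hb]; exact div_pos one_pos (by linarith)
  have hb1 : b ≤ 1 := by rw [hb, div_le_one (by linarith)]; linarith
  have ha0 : (0:ℝ) ≤ 1 - b := by linarith
  have hcomb : (1-b) * 2 + b * z = 3 := by rw [hb]; field_simp; ring
  have hkey := hconv.2 h2 hz ha0 (le_of_lt hb0) (by ring)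
  rw [smul_eq_mul, smul_eq_mul, smul_eq_mul, smul_eq_mul, hcomb, Real.Gamma_two] at hkey
  rw [hG3] at hkey
  have hbz : b * (z-1) = 1 + b := by rw [hb]; field_simp; ring
  nlinarith [hkey]

/-- Gautschi-type upper bound : Γ(x+a) ≤ Γ(x) * x^a for 0 < a < 1, x > 0. -/
lemma gamma_add_le {x a : ℝ} (hx : 0 < x) (ha0 : 0 < a) (ha1 : a < 1) :
    Real.Gamma (x + a) ≤ Real.Gamma x * x ^ a := by
  have h := Real.Gamma_mul_add_mul_le_rpow_Gamma_mul_rpow_Gamma (s := x) (t := x + 1)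
    (a := 1 - a) (b := a) hx (by linarith) (by linarith) ha0 (by ring)
  have harg : (1-a) * x + a * (x+1) = x + a := by ring
  rw [harg, Real.Gamma_add_one (ne_of_gt hx)] at h
  calc Real.Gamma (x + a) ≤ Real.Gamma x ^ (1-a) * (x * Real.Gamma x) ^ a := h
    _ = Real.Gamma x * x ^ a := by
        rw [Real.mul_rpow (le_of_lt hx) (le_of_lt (Real.Gamma_pos_of_pos hx)),
          ← mul_assoc, mul_comm (Real.Gamma x ^ (1-a)), mul_assoc, mul_comm (Real.Gamma x ^ (1-a)),
          ← Real.rpow_add (Real.Gamma_pos_of_pos hx)]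
        norm_num
        ring

/-- Gautschi-type lower bound : Γ(x+a) ≥ x Γ(x) / (x+a)^(1-a). -/
lemma gamma_add_ge {x a : ℝ} (hx : 0 < x) (ha0 : 0 < a) (ha1 : a < 1) :
    x * Real.Gamma x / (x + a) ^ (1 - a) ≤ Real.Gamma (x + a) := by
  have hxa : 0 < x + a := by linarith
  have h := Real.Gamma_mul_add_mul_le_rpow_Gamma_mul_rpow_Gamma (s := x + a) (t := x + a + 1)
    (a := a) (b := 1 - a) hxa (by linarith) ha0 (by linarith) (by ring)
  have harg : a * (x+a) + (1-a) * (x+a+1) = x + 1 := by ring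
  rw [harg, Real.Gamma_add_one (ne_of_gt hx), Real.Gamma_add_one (ne_of_gt hxa)] at h
  have hG : 0 < Real.Gamma (x + a) := Real.Gamma_pos_of_pos hxa
  have hrhs : Real.Gamma (x+a) ^ a * ((x+a) * Real.Gamma (x+a)) ^ (1-a)
      = Real.Gamma (x+a) * (x+a) ^ (1-a) := by
    rw [Real.mul_rpow (le_of_lt hxa) (le_of_lt hG), ← mul_assoc,
      mul_comm (Real.Gamma (x+a) ^ a), mul_assoc, mul_comm (Real.Gamma (x+a) ^ a),
      ← Real.rpow_add hG]
    norm_num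
    ring
  rw [hrhs] at h
  rw [div_le_iff₀ (Real.rpow_pos_of_pos hxa _)]
  linarith

/-- The key coefficient bound: Γ(α(l+μ)) ≤ Γ(αμ) l! (2 Γ(α(1+μ)))^l. -/
lemma coef_bound (α μ : ℝ) (hμ : 0 < μ) (hα0 : 0 < α) (hα1 : α < 1) (l : ℕ) :
    Real.Gamma (α * ((l:ℝ) + μ)) ≤
      Real.Gamma (α * μ) * (Nat.factorial l : ℝ) * (2 * Real.Gamma (α * (1 + μ))) ^ l := by
  have hαμ : 0 < α * μ := mul_pos hα0 hμ
  have hG : 0 < Real.Gamma (α * μ) := Real.Gamma_pos_of_pos hαμ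
  have hz : 0 < α * (1 + μ) := by positivity
  have hG1 : 0 < Real.Gamma (α * (1 + μ)) := Real.Gamma_pos_of_pos hz
  induction l with
  | zero => simp
  | succ l ih =>
    rcases Nat.eq_zero_or_pos l with rfl | hl
    · have h2 : 1 ≤ 2 * Real.Gamma (α * μ) := by linarith [gamma_gt_half hαμ]
      push_cast
      norm_num [Nat.factorial]
      nlinarith [hG1]
    · push_cast
      have hx : 0 < α * ((l:ℝ) + μ) := by positivity
      have harg : α * ((l:ℝ) + 1 + μ) = α * ((l:ℝ) + μ) + α := by push_cast; ring
      have step : Real.Gamma (α * ((l:ℝ) + 1 + μ))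
          ≤ Real.Gamma (α * ((l:ℝ) + μ)) * (α * ((l:ℝ) + μ)) ^ α := by
        rw [harg]; exact gamma_add_le hx hα0 hα1
      have hl1 : (1:ℝ) ≤ (l:ℝ) := by exact_mod_cast hl
      set x := α * ((l:ℝ) + μ) with hxdef
      set z := α * (1 + μ) with hzdef
      have hxz : x ≤ z + (l:ℝ) - 1 := by
        rw [hxdef, hzdef]
        nlinarith [hα1, hl1]
      have key : x ^ α ≤ 2 * ((l:ℝ) + 1) * Real.Gamma z := by
        rcases le_or_gt x 1 with hx1 | hx1
        · have : x ^ α ≤ 1 := Real.rpow_le_one (le_of_lt hx) hx1 (le_of_lt hα0)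
          nlinarith [gamma_gt_half hz]
        · have hxa : x ^ α ≤ x := by
            calc x ^ α ≤ x ^ (1:ℝ) :=
              Real.rpow_le_rpow_of_exponent_le (le_of_lt hx1) (le_of_lt hα1)
            _ = x := Real.rpow_one x
          rcases le_or_gt z 2 with hz2 | hz2
          · nlinarith [gamma_gt_half hz]
          · rcases le_or_gt z 3 with hz3 | hz3
            · nlinarith [gamma_ge_one_of_ge_two (le_of_lt hz2)]
            · nlinarith [gamma_ge_sub_one (le_of_lt hz3)]
      calc Real.Gamma (α * ((l:ℝ) + 1 + μ)) ≤ Real.Gamma x * x ^ α := step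
        _ ≤ (Real.Gamma (α*μ) * (Nat.factorial l : ℝ) * (2 * Real.Gamma z) ^ l) * x ^ α := by
            apply mul_le_mul_of_nonneg_right ih (Real.rpow_nonneg (le_of_lt hx) α)
        _ ≤ (Real.Gamma (α*μ) * (Nat.factorial l : ℝ) * (2 * Real.Gamma z) ^ l)
              * (2 * ((l:ℝ)+1) * Real.Gamma z) := by
            apply mul_le_mul_of_nonneg_left key
            positivity
        _ = Real.Gamma (α*μ) * (Nat.factorial (l+1) : ℝ) * (2 * Real.Gamma z) ^ (l+1) := by
            rw [Nat.factorial_succ]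
            push_cast
            ring

end AuxGamma

section AuxPS
open PowerSeries Finset

/-- the key power series identity: g * (g^L)' = L • (g' * g^L). -/
lemma miller_ps (g : ℝ⟦X⟧) (L : ℕ) (hL : 1 ≤ L) :
    g * (d⁄dX ℝ (g ^ L)) = (L : ℝ) • ((d⁄dX ℝ g) * g ^ L) := by
  rw [Derivation.leibniz_pow]
  have : g * ((L : ℕ) • g ^ (L - 1) • d⁄dX ℝ g) = (L : ℝ) • ((g * g ^ (L-1)) * d⁄dX ℝ g) := by
    rw [nsmul_eq_mul, smul_eq_mul, PowerSeries.smul_eq_C_mul, ← map_natCast ((PowerSeries.C (R := ℝ))) L]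
    ring
  rw [this, ← pow_succ' g (L-1), Nat.sub_add_cancel hL]
  ring_nf

/-- coefficient-level Miller recurrence. -/
lemma miller_coeff (g : ℝ⟦X⟧) (L : ℕ) (hL : 1 ≤ L) (i : ℕ) :
    ((i:ℝ) + 1) * (PowerSeries.coeff 0 g) * (PowerSeries.coeff (i+1) (g ^ L)) =
      ∑ l ∈ Finset.range (i + 1),
        (((l:ℝ)+1) * (L:ℝ) + ((l:ℝ)+1) - ((i:ℝ)+1)) * (PowerSeries.coeff (l+1) g)
          * (PowerSeries.coeff (i - l) (g ^ L)) := by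
  set a : ℕ → ℝ := fun k => PowerSeries.coeff k g with ha
  set h : ℕ → ℝ := fun k => PowerSeries.coeff k (g ^ L) with hh
  have hc := congrArg (PowerSeries.coeff i) (miller_ps g L hL)
  rw [_root_.map_smul, PowerSeries.coeff_mul, PowerSeries.coeff_mul,
    Finset.Nat.sum_antidiagonal_eq_sum_range_succ_mk,
    Finset.Nat.sum_antidiagonal_eq_sum_range_succ_mk] at hc
  simp only [PowerSeries.coeff_derivative, smul_eq_mul] at hc
  have hS1 : ∑ k ∈ Finset.range (i+1), (a k) * (h (i - k + 1) * (↑(i-k) + 1))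
      = ∑ k ∈ Finset.range (i+1), (a k) * (h (i - k + 1)) * ((i:ℝ) - (k:ℝ) + 1) := by
    apply Finset.sum_congr rfl
    intro k hk
    have hki : k ≤ i := by simpa [Nat.lt_succ_iff] using hk
    have : ((i - k : ℕ) : ℝ) = (i:ℝ) - (k:ℝ) := by
      push_cast [Nat.cast_sub hki]; ring
    rw [this]; ring
  rw [hS1] at hc
  have hsplit : ∑ k ∈ Finset.range (i+1), (a k) * (h (i - k + 1)) * ((i:ℝ) - (k:ℝ) + 1)
      = (∑ k ∈ Finset.range i, (a (k+1)) * (h (i - (k+1) + 1)) * ((i:ℝ) - ((k:ℝ)+1) + 1))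
        + (a 0) * (h (i - 0 + 1)) * ((i:ℝ) - 0 + 1) := by
    rw [Finset.sum_range_succ']
    push_cast
    ring_nf
    rw [add_right_comm]; congr 1; apply Finset.sum_congr rfl; intros; ring
  have hidx : ∀ k, k < i → i - (k+1) + 1 = i - k := by omega
  have hsum2 : ∑ k ∈ Finset.range i, (a (k+1)) * (h (i - (k+1) + 1)) * ((i:ℝ) - ((k:ℝ)+1) + 1)
      = ∑ k ∈ Finset.range i, (a (k+1)) * (h (i - k)) * ((i:ℝ) - (k:ℝ)) := by
    apply Finset.sum_congr rfl
    intro k hk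
    rw [hidx k (Finset.mem_range.mp hk)]
    ring
  have hext : ∑ k ∈ Finset.range i, (a (k+1)) * (h (i - k)) * ((i:ℝ) - (k:ℝ))
      = ∑ k ∈ Finset.range (i+1), (a (k+1)) * (h (i - k)) * ((i:ℝ) - (k:ℝ)) := by
    rw [Finset.sum_range_succ]
    simp
  rw [hsplit, hsum2, hext] at hc
  have hrhs : ∑ l ∈ Finset.range (i + 1),
        (((l:ℝ)+1) * (L:ℝ) + ((l:ℝ)+1) - ((i:ℝ)+1)) * (a (l+1)) * (h (i - l))
      = (L:ℝ) * (∑ k ∈ Finset.range (i+1), a (k+1) * (↑k + 1) * h (i - k))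
        - ∑ k ∈ Finset.range (i+1), (a (k+1)) * (h (i - k)) * ((i:ℝ) - (k:ℝ)) := by
    rw [Finset.mul_sum, ← Finset.sum_sub_distrib]
    apply Finset.sum_congr rfl
    intro k hk
    ring
  rw [hrhs]
  simp only [Nat.sub_zero] at hc
  linarith [hc]

/-- termwise abs bound for coefficients of powers -/
lemma abs_coeff_pow_le (p q : ℝ⟦X⟧)
    (h : ∀ l, |PowerSeries.coeff l p| ≤ PowerSeries.coeff l q) :
    ∀ (n : ℕ) (i : ℕ), |PowerSeries.coeff i (p ^ n)| ≤ PowerSeries.coeff i (q ^ n) := by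
  intro n
  induction n with
  | zero =>
    intro i
    simp [PowerSeries.coeff_one]
    split_ifs <;> simp
  | succ n ihn =>
    intro i
    rw [pow_succ, pow_succ, PowerSeries.coeff_mul, PowerSeries.coeff_mul]
    calc |∑ x ∈ Finset.HasAntidiagonal.antidiagonal i,
          PowerSeries.coeff x.1 (p ^ n) * PowerSeries.coeff x.2 p|
        ≤ ∑ x ∈ Finset.HasAntidiagonal.antidiagonal i,
          |PowerSeries.coeff x.1 (p ^ n) * PowerSeries.coeff x.2 p| :=
          Finset.abs_sum_le_sum_abs _ _
      _ ≤ ∑ x ∈ Finset.HasAntidiagonal.antidiagonal i,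
          PowerSeries.coeff x.1 (q ^ n) * PowerSeries.coeff x.2 q := by
          apply Finset.sum_le_sum
          intro x _
          rw [abs_mul]
          exact mul_le_mul (ihn x.1) (h x.2) (abs_nonneg _)
            (le_trans (abs_nonneg _) (ihn x.1))

/-- geometric sum bound -/
lemma geom_sum_le_pow (x : ℝ) (hx : 0 ≤ x) (i : ℕ) :
    ∑ k ∈ Finset.range (i+1), x ^ k ≤ (x + 1) ^ i := by
  induction i with
  | zero => simp
  | succ i ih =>
    rw [Finset.sum_range_succ]
    have hxi : x ^ (i+1) ≤ x * (x+1)^i := by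
      rw [pow_succ, mul_comm (x^i) x]
      exact mul_le_mul_of_nonneg_left (pow_le_pow_left₀ hx (by linarith) i) hx
    have h2 : (x+1) ^ (i+1) = (x+1)^i + x*(x+1)^i := by rw [pow_succ]; ring
    linarith [ih]

/-- coefficients of q^n bounded when coefficients of q are bounded geometrically -/
lemma coeff_pow_le_of_coeff_le (q : ℝ⟦X⟧) (G c : ℝ) (hG : 0 ≤ G) (hc : 0 ≤ c)
    (hq0 : ∀ l, 0 ≤ PowerSeries.coeff l q)
    (hq : ∀ l, PowerSeries.coeff l q ≤ G * c ^ l) :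
    ∀ (n : ℕ) (i : ℕ), PowerSeries.coeff i (q ^ n) ≤ G ^ n * (c * n) ^ i := by
  intro n
  induction n with
  | zero =>
    intro i
    simp only [pow_zero, one_mul, PowerSeries.coeff_one]
    split_ifs with hi
    · subst hi; simp
    · positivity
  | succ n ihn =>
    intro i
    rw [pow_succ, PowerSeries.coeff_mul, Finset.Nat.sum_antidiagonal_eq_sum_range_succ_mk]
    have step : ∀ k ∈ Finset.range (i+1),
        PowerSeries.coeff k (q ^ n) * PowerSeries.coeff (i - k) q
          ≤ (G ^ n * (c*n) ^ k) * (G * c ^ (i - k)) := by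
      intro k hk
      apply mul_le_mul (ihn k) (hq (i-k)) (hq0 _)
      positivity
    calc ∑ k ∈ Finset.range (i+1),
          PowerSeries.coeff k (q ^ n) * PowerSeries.coeff (i - k) q
        ≤ ∑ k ∈ Finset.range (i+1), (G ^ n * (c*n) ^ k) * (G * c ^ (i - k)) :=
          Finset.sum_le_sum step
      _ = G ^ (n+1) * c ^ i * ∑ k ∈ Finset.range (i+1), (n:ℝ) ^ k := by
          rw [Finset.mul_sum]
          apply Finset.sum_congr rfl
          intro k hk
          have hki : k ≤ i := by simpa [Nat.lt_succ_iff] using hk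
          have hcc : c ^ k * c ^ (i-k) = c ^ i := by
            rw [← pow_add, Nat.add_sub_cancel' hki]
          rw [mul_pow, ← hcc]
          ring
      _ ≤ G ^ (n+1) * c ^ i * ((n:ℝ) + 1) ^ i := by
          apply mul_le_mul_of_nonneg_left (geom_sum_le_pow _ (by positivity) i)
          positivity
      _ = G ^ (n+1) * (c * ((n+1:ℕ):ℝ)) ^ i := by
          push_cast
          rw [mul_pow]
          ring

end AuxPS

/-- The recursively defined coefficients δ_i. -/
noncomputable def deltaCoef (α μ rh : ℝ) (L : ℕ) : ℕ → ℝ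
  | 0 => Real.Gamma (α * μ) ^ L
  | (i + 1) =>
      (1 / (((i : ℝ) + 1) * Real.Gamma (α * μ))) *
        ∑ l ∈ Finset.range (i + 1),
          deltaCoef α μ rh L (i - l) *
            ((((l : ℝ) + 1) * (L : ℝ) + ((l : ℝ) + 1) - ((i : ℝ) + 1)) *
              Real.Gamma (α * (((l : ℝ) + 1) + μ)) *
              (-μ * rh ^ (-α)) ^ (l + 1) / (Nat.factorial (l + 1) : ℝ))
  termination_by i => i
  decreasing_by omega

noncomputable def acoef (α μ rh : ℝ) (l : ℕ) : ℝ :=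
  Real.Gamma (α * ((l : ℝ) + μ)) * (-μ * rh ^ (-α)) ^ l / (Nat.factorial l : ℝ)

lemma delta_eq_coeff (α μ rh : ℝ) (L : ℕ) (hL : 1 ≤ L) (hG : Real.Gamma (α * μ) ≠ 0) :
    ∀ i, deltaCoef α μ rh L i =
      PowerSeries.coeff i ((PowerSeries.mk (acoef α μ rh)) ^ L) := by
  intro i
  induction i using Nat.strong_induction_on with
  | _ i ih =>
    match i with
    | 0 =>
      rw [deltaCoef]
      rw [PowerSeries.coeff_zero_eq_constantCoeff, map_pow]
      simp [acoef, Nat.factorial]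
    | (i+1) =>
      rw [deltaCoef]
      have hm := miller_coeff (PowerSeries.mk (acoef α μ rh)) L hL i
      have ha0 : PowerSeries.coeff 0 (PowerSeries.mk (acoef α μ rh)) = Real.Gamma (α * μ) := by
        simp [acoef, Nat.factorial]
      rw [ha0] at hm
      have hi1 : ((i:ℝ) + 1) ≠ 0 := by positivity
      have hsum : ∑ l ∈ Finset.range (i + 1),
          deltaCoef α μ rh L (i - l) *
            ((((l : ℝ) + 1) * (L : ℝ) + ((l : ℝ) + 1) - ((i : ℝ) + 1)) *
              Real.Gamma (α * (((l : ℝ) + 1) + μ)) *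
              (-μ * rh ^ (-α)) ^ (l + 1) / (Nat.factorial (l + 1) : ℝ))
          = ∑ l ∈ Finset.range (i + 1),
            (((l:ℝ)+1) * (L:ℝ) + ((l:ℝ)+1) - ((i:ℝ)+1)) *
              (PowerSeries.coeff (l+1) (PowerSeries.mk (acoef α μ rh)))
              * (PowerSeries.coeff (i - l) ((PowerSeries.mk (acoef α μ rh)) ^ L)) := by
        apply Finset.sum_congr rfl
        intro l hl
        rw [← ih (i - l) (by omega)]
        rw [PowerSeries.coeff_mk]
        unfold acoef
        push_cast
        ring
      rw [hsum, ← hm]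
      field_simp

set_option maxHeartbeats 2000000 in
/-- Mittag-Leffler bound on the absolute sum-PDF series for 0 < α < 1. -/
theorem sum_pdf_series_lt_mittagLeffler
    (α μ rh : ℝ) (hμ : 0 < μ) (hrh : 0 < rh) (hα0 : 0 < α) (hα1 : α < 1)
    (L : ℕ) (hL : 1 ≤ L) (r : ℝ) (hr : 0 < r) :
    Summable (fun i : ℕ =>
      |deltaCoef α μ rh L i| * r ^ (α * (i : ℝ) + α * μ * (L : ℝ) - 1) /
        Real.Gamma (α * (i : ℝ) + α * μ * (L : ℝ))) ∧
    Summable (fun i : ℕ =>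
      (2 * μ * (L : ℝ) * Real.Gamma (α * (1 + μ)) * (r / rh) ^ α) ^ i /
        Real.Gamma ((i : ℝ) * α + α * μ * (L : ℝ))) ∧
    (∑' i : ℕ,
        |deltaCoef α μ rh L i| * r ^ (α * (i : ℝ) + α * μ * (L : ℝ) - 1) /
          Real.Gamma (α * (i : ℝ) + α * μ * (L : ℝ))) <
      r ^ (α * μ * (L : ℝ) - 1) * Real.Gamma (α * μ) ^ L *
        ∑' i : ℕ,
          (2 * μ * (L : ℝ) * Real.Gamma (α * (1 + μ)) * (r / rh) ^ α) ^ i /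
            Real.Gamma ((i : ℝ) * α + α * μ * (L : ℝ)) := by
  have hαμ : 0 < α * μ := mul_pos hα0 hμ
  have hG : 0 < Real.Gamma (α * μ) := Real.Gamma_pos_of_pos hαμ
  have hz1 : 0 < α * (1 + μ) := by positivity
  have hG1 : 0 < Real.Gamma (α * (1 + μ)) := Real.Gamma_pos_of_pos hz1
  have hL0 : (0:ℝ) < (L:ℝ) := by exact_mod_cast hL
  have hrhα : 0 < rh ^ (-α) := Real.rpow_pos_of_pos hrh _
  set Γ₁ := Real.Gamma (α * (1 + μ)) with hΓ₁
  set c : ℝ := 2 * Γ₁ * μ * rh ^ (-α) with hc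
  have hc0 : 0 < c := by rw [hc]; positivity
  set β : ℝ := α * μ * (L:ℝ) with hβ
  have hβ0 : 0 < β := by rw [hβ]; positivity
  set x : ℝ := 2 * μ * (L:ℝ) * Γ₁ * (r / rh) ^ α with hx
  have hx0 : 0 < x := by
    rw [hx]
    have : 0 < (r/rh) ^ α := Real.rpow_pos_of_pos (by positivity) _
    positivity
  -- base equality : x = (c*L) * r^α
  have hbase : x = (c * (L:ℝ)) * r ^ α := by
    rw [hx, hc, Real.div_rpow hr.le hrh.le, Real.rpow_neg hrh.le, div_eq_mul_inv]
    ring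
  -- the delta bound
  have hdelta : ∀ i, |deltaCoef α μ rh L i| ≤ Real.Gamma (α*μ) ^ L * (c * (L:ℝ)) ^ i := by
    intro i
    set q : PowerSeries ℝ := PowerSeries.mk
      (fun l => Real.Gamma (α * ((l:ℝ) + μ)) * (μ * rh ^ (-α)) ^ l / (Nat.factorial l : ℝ))
      with hq
    have habs : ∀ l, |PowerSeries.coeff l (PowerSeries.mk (acoef α μ rh))|
        ≤ PowerSeries.coeff l q := by
      intro l
      rw [PowerSeries.coeff_mk, hq, PowerSeries.coeff_mk]
      unfold acoef
      rw [abs_div, abs_mul, abs_pow]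
      have h1 : |(-μ * rh ^ (-α))| = μ * rh ^ (-α) := by
        rw [abs_of_nonpos (by nlinarith)]; ring
      rw [h1, abs_of_nonneg (le_of_lt (Real.Gamma_pos_of_pos (by positivity))),
        abs_of_nonneg (by positivity : (0:ℝ) ≤ (Nat.factorial l : ℝ))]
    have hq0 : ∀ l, 0 ≤ PowerSeries.coeff l q := by
      intro l
      rw [hq, PowerSeries.coeff_mk]
      have := Real.Gamma_pos_of_pos (show (0:ℝ) < α * ((l:ℝ) + μ) by positivity)
      positivity
    have hqle : ∀ l, PowerSeries.coeff l q ≤ Real.Gamma (α*μ) * c ^ l := by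
      intro l
      rw [hq, PowerSeries.coeff_mk, div_le_iff₀ (by positivity : (0:ℝ) < (Nat.factorial l : ℝ))]
      calc Real.Gamma (α * ((l:ℝ) + μ)) * (μ * rh ^ (-α)) ^ l
          ≤ (Real.Gamma (α*μ) * (Nat.factorial l : ℝ) * (2 * Γ₁) ^ l) * (μ * rh ^ (-α)) ^ l := by
            apply mul_le_mul_of_nonneg_right (coef_bound α μ hμ hα0 hα1 l) (by positivity)
        _ = Real.Gamma (α*μ) * c ^ l * (Nat.factorial l : ℝ) := by
            have hcl : (2*Γ₁)^l * (μ * rh ^ (-α))^l = c ^ l := by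
              rw [← mul_pow, hc]
              congr 1
              ring
            calc Real.Gamma (α*μ) * (Nat.factorial l : ℝ) * (2 * Γ₁) ^ l * (μ * rh ^ (-α)) ^ l
                = Real.Gamma (α*μ) * ((2*Γ₁)^l * (μ * rh ^ (-α))^l) * (Nat.factorial l : ℝ) := by
                  ring
              _ = Real.Gamma (α*μ) * c ^ l * (Nat.factorial l : ℝ) := by rw [hcl]
    rw [delta_eq_coeff α μ rh L hL (ne_of_gt hG) i]
    calc |PowerSeries.coeff i ((PowerSeries.mk (acoef α μ rh)) ^ L)|
        ≤ PowerSeries.coeff i (q ^ L) := abs_coeff_pow_le _ _ habs L i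
      _ ≤ Real.Gamma (α*μ) ^ L * (c * (L:ℝ)) ^ i :=
          coeff_pow_le_of_coeff_le q _ c hG.le hc0.le hq0 hqle L i
  -- strict bound at i = 1
  have hδ1 : deltaCoef α μ rh L 1 =
      Real.Gamma (α*μ) ^ L * ((L:ℝ) * Γ₁ * (-(μ * rh ^ (-α)))) / Real.Gamma (α*μ) := by
    rw [show (1:ℕ) = 0 + 1 from rfl, deltaCoef]
    rw [Finset.sum_range_one, deltaCoef]
    norm_num [Nat.factorial]
    rw [hΓ₁]
    ring
  have hstrict1 : |deltaCoef α μ rh L 1| < Real.Gamma (α*μ) ^ L * (c * (L:ℝ)) ^ 1 := by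
    rw [hδ1]
    have habs1 : |Real.Gamma (α*μ) ^ L * ((L:ℝ) * Γ₁ * (-(μ * rh ^ (-α)))) / Real.Gamma (α*μ)|
        = Real.Gamma (α*μ) ^ L * ((L:ℝ) * Γ₁ * (μ * rh ^ (-α))) / Real.Gamma (α*μ) := by
      rw [abs_div, abs_of_nonneg hG.le]
      congr 1
      rw [show Real.Gamma (α*μ) ^ L * ((L:ℝ) * Γ₁ * (-(μ * rh ^ (-α))))
        = -(Real.Gamma (α*μ) ^ L * ((L:ℝ) * Γ₁ * (μ * rh ^ (-α)))) by ring, abs_neg]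
      rw [abs_of_nonneg]
      positivity
    rw [habs1, div_lt_iff₀ hG, pow_one, hc]
    have h2G : 1 < 2 * Real.Gamma (α*μ) := by linarith [gamma_gt_half hαμ]
    have hA : 0 < Real.Gamma (α*μ) ^ L * ((L:ℝ) * Γ₁ * (μ * rh ^ (-α))) := by positivity
    nlinarith [hA, h2G]
  -- positivity of Gamma denominators
  have hDpos : ∀ i : ℕ, 0 < Real.Gamma ((i:ℝ) * α + β) := by
    intro i
    apply Real.Gamma_pos_of_pos
    have : (0:ℝ) ≤ (i:ℝ) * α := by positivity
    linarith
  -- define the RHS terms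
  set v : ℕ → ℝ := fun i => x ^ i / Real.Gamma ((i:ℝ) * α + β) with hv
  have hvpos : ∀ i, 0 < v i := fun i => div_pos (pow_pos hx0 i) (hDpos i)
  -- summability of v by ratio test
  have hvsum : Summable v := by
    set M : ℝ := max 1 (4 * x) with hM
    have hM1 : (1:ℝ) ≤ M := le_max_left _ _
    have hM4x : 4 * x ≤ M := le_max_right _ _
    obtain ⟨N, hN⟩ := exists_nat_ge (M ^ (1/α) / α)
    apply summable_of_ratio_norm_eventually_le (r := 1/2) (by norm_num)
    filter_upwards [Filter.eventually_ge_atTop N] with n hn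
    set z : ℝ := (n:ℝ) * α + β with hz
    have hzN : M ^ (1/α) ≤ z := by
      have h1 : M ^ (1/α) ≤ (N:ℝ) * α := by
        rw [div_le_iff₀ hα0] at hN
        linarith
      have h2 : (N:ℝ) * α ≤ (n:ℝ) * α := by
        apply mul_le_mul_of_nonneg_right _ hα0.le
        exact_mod_cast hn
      rw [hz]; linarith
    have hz1' : (1:ℝ) ≤ z := by
      have : (1:ℝ) ≤ M ^ (1/α) := Real.one_le_rpow hM1 (by positivity)
      linarith
    have hzpos : 0 < z := by linarith
    have hza : (4 * x) ≤ (z + α) ^ α := by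
      calc (4*x) ≤ M := hM4x
        _ = (M ^ (1/α)) ^ α := by
            rw [← Real.rpow_mul (le_trans zero_le_one hM1), one_div,
              inv_mul_cancel₀ (ne_of_gt hα0), Real.rpow_one]
        _ ≤ (z + α) ^ α := by
            apply Real.rpow_le_rpow (by positivity) (by linarith) hα0.le
    -- Γ(z+α) ≥ 2x Γ(z)
    have hkey : 2 * x * Real.Gamma z ≤ Real.Gamma (z + α) := by
      have hgau := gamma_add_ge hzpos hα0 hα1
      have hsub : (z + α) ^ ((1:ℝ) - α) = (z + α) / (z + α) ^ α := by
        rw [Real.rpow_sub (by positivity), Real.rpow_one]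
      have h2 : 2 * x * (z + α) ^ ((1:ℝ) - α) ≤ z := by
        rw [hsub]
        have hzα : 0 < (z+α)^α := Real.rpow_pos_of_pos (by positivity) _
        have e1 : 2*x*((z+α)/(z+α)^α) = (2*x*(z+α))/(z+α)^α := by ring
        rw [e1, div_le_iff₀ hzα]
        have h5 := mul_le_mul_of_nonneg_left hza (le_of_lt hzpos)
        nlinarith [h5, hx0, hzpos, hα1, hz1']
      have hGz : 0 < Real.Gamma z := Real.Gamma_pos_of_pos hzpos
      have h3 : 2 * x * Real.Gamma z ≤ z * Real.Gamma z / (z + α) ^ (1 - α) := by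
        rw [le_div_iff₀ (Real.rpow_pos_of_pos (by positivity) _)]
        calc 2 * x * Real.Gamma z * (z + α) ^ (1 - α)
            = (2 * x * (z + α) ^ ((1:ℝ) - α)) * Real.Gamma z := by ring
          _ ≤ z * Real.Gamma z := mul_le_mul_of_nonneg_right h2 hGz.le
      linarith [hgau]
    -- conclude ratio
    have hzsucc : ((n:ℝ)+1) * α + β = z + α := by rw [hz]; ring
    rw [Real.norm_eq_abs, Real.norm_eq_abs, abs_of_pos (hvpos (n+1)), abs_of_pos (hvpos n)]
    rw [hv]
    simp only []
    push_cast
    rw [hzsucc]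
    rw [← hz]
    have hGza : 0 < Real.Gamma (z + α) := Real.Gamma_pos_of_pos (by positivity)
    have hGz : 0 < Real.Gamma z := Real.Gamma_pos_of_pos hzpos
    rw [div_le_iff₀ hGza]
    have e1 : 1/2 * (x ^ n / Real.Gamma z) * Real.Gamma (z+α)
        = (x^n / Real.Gamma z) * (Real.Gamma (z+α) / 2) := by ring
    calc x ^ (n+1) = (x^n / Real.Gamma z) * (x * Real.Gamma z) := by
          field_simp; ring
      _ ≤ (x^n / Real.Gamma z) * (Real.Gamma (z+α) / 2) := by
          apply mul_le_mul_of_nonneg_left _ (by positivity)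
          linarith [hkey]
      _ = 1/2 * (x ^ n / Real.Gamma z) * Real.Gamma (z+α) := by ring
  -- termwise comparison
  have hfv : ∀ i : ℕ,
      |deltaCoef α μ rh L i| * r ^ (α * (i:ℝ) + β - 1) / Real.Gamma (α * (i:ℝ) + β)
        ≤ (r ^ (β - 1) * Real.Gamma (α*μ) ^ L) * v i := by
    intro i
    have hAe : α * (i:ℝ) + β = (i:ℝ) * α + β := by ring
    have hGi : Real.Gamma (α * (i:ℝ) + β) = Real.Gamma ((i:ℝ) * α + β) := by rw [hAe]
    have hsplit : r ^ (α * (i:ℝ) + β - 1) = (r ^ α) ^ i * r ^ (β - 1) := by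
      rw [show α * (i:ℝ) + β - 1 = α * (i:ℝ) + (β - 1) by ring, Real.rpow_add hr,
        Real.rpow_mul hr.le, Real.rpow_natCast]
    have hui : (r ^ (β - 1) * Real.Gamma (α*μ) ^ L) * v i
        = (Real.Gamma (α*μ) ^ L * (c * (L:ℝ)) ^ i) * ((r ^ α) ^ i * r ^ (β - 1))
            / Real.Gamma ((i:ℝ) * α + β) := by
      rw [hv]
      simp only []
      rw [hbase, mul_pow]
      ring
    rw [hGi, hsplit, hui]
    have hD := hDpos i
    rw [div_le_div_iff_of_pos_right hD]
    have hrnn : 0 ≤ (r ^ α) ^ i * r ^ (β - 1) := by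
      have h1 : 0 < r ^ α := Real.rpow_pos_of_pos hr _
      have h2 : 0 < r ^ (β-1) := Real.rpow_pos_of_pos hr _
      positivity
    exact mul_le_mul_of_nonneg_right (hdelta i) hrnn
  -- strict termwise comparison at i = 1
  have hfv1 : |deltaCoef α μ rh L 1| * r ^ (α * ((1:ℕ):ℝ) + β - 1) / Real.Gamma (α * ((1:ℕ):ℝ) + β)
      < (r ^ (β - 1) * Real.Gamma (α*μ) ^ L) * v 1 := by
    have hAe : α * ((1:ℕ):ℝ) + β = ((1:ℕ):ℝ) * α + β := by ring
    have hGi : Real.Gamma (α * ((1:ℕ):ℝ) + β) = Real.Gamma (((1:ℕ):ℝ) * α + β) := by rw [hAe]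
    have hsplit : r ^ (α * ((1:ℕ):ℝ) + β - 1) = (r ^ α) ^ (1:ℕ) * r ^ (β - 1) := by
      rw [show α * ((1:ℕ):ℝ) + β - 1 = α * ((1:ℕ):ℝ) + (β - 1) by ring, Real.rpow_add hr,
        Real.rpow_mul hr.le, Real.rpow_natCast]
    have hui : (r ^ (β - 1) * Real.Gamma (α*μ) ^ L) * v 1
        = (Real.Gamma (α*μ) ^ L * (c * (L:ℝ)) ^ (1:ℕ)) * ((r ^ α) ^ (1:ℕ) * r ^ (β - 1))
            / Real.Gamma (((1:ℕ):ℝ) * α + β) := by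
      rw [hv]
      simp only []
      rw [hbase, mul_pow]
      push_cast
      ring
    rw [hGi, hsplit, hui]
    have hD : 0 < Real.Gamma (((1:ℕ):ℝ) * α + β) := hDpos 1
    rw [div_lt_div_iff_of_pos_right hD]
    have hrpos : 0 < (r ^ α) ^ (1:ℕ) * r ^ (β - 1) := by
      have : 0 < r ^ α := Real.rpow_pos_of_pos hr _
      have : 0 < r ^ (β-1) := Real.rpow_pos_of_pos hr _
      positivity
    exact mul_lt_mul_of_pos_right hstrict1 hrpos
  -- summability of the LHS series
  have hKv : Summable (fun i : ℕ => (r ^ (β - 1) * Real.Gamma (α*μ) ^ L) * v i) :=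
    hvsum.mul_left _
  have hfsum : Summable (fun i : ℕ =>
      |deltaCoef α μ rh L i| * r ^ (α * (i:ℝ) + β - 1) / Real.Gamma (α * (i:ℝ) + β)) := by
    apply Summable.of_nonneg_of_le _ hfv hKv
    intro i
    have hD := Real.Gamma_pos_of_pos (show (0:ℝ) < α * (i:ℝ) + β by positivity)
    positivity
  refine ⟨hfsum, hvsum, ?_⟩
  calc (∑' i : ℕ, |deltaCoef α μ rh L i| * r ^ (α * (i:ℝ) + β - 1)
          / Real.Gamma (α * (i:ℝ) + β))
      < ∑' i : ℕ, (r ^ (β - 1) * Real.Gamma (α*μ) ^ L) * v i := by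
        refine Summable.tsum_lt_tsum_of_nonneg (fun b => ?_) hfv hfv1 hKv
        have hD := Real.Gamma_pos_of_pos (show (0:ℝ) < α * (b:ℝ) + β by positivity)
        positivity
    _ = r ^ (β - 1) * Real.Gamma (α*μ) ^ L * ∑' i, v i := tsum_mul_left
end

section
/- Let μ, r̂ > 0, α ≥ 1, and let L ≥ 1 be an integer. Then for every r > 0, ∑_{i=0}^∞ |δ_i| · r^{αi + αμL − 1} / Γ(αi + αμL) < r^{αμL − 1} · Γ(αμ)^L · ( 1/Γ(Lαμ) + 2·L·exp(μ·(r/r̂)^α) − 2·L ). -/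
open MeasureTheory Real

open Finset PowerSeries


lemma ofReal_beta_integrand (p q x : ℝ) (hx0 : 0 ≤ x) (hx1 : x ≤ 1) :
    (x:ℂ) ^ ((p:ℂ) - 1) * (1 - (x:ℂ)) ^ ((q:ℂ) - 1)
      = ((x ^ (p - 1) * (1 - x) ^ (q - 1) : ℝ) : ℂ) := by
  have h1 : ((p:ℂ) - 1) = ((p - 1 : ℝ) : ℂ) := by push_cast; ring
  have h2 : ((q:ℂ) - 1) = ((q - 1 : ℝ) : ℂ) := by push_cast; ring
  have h3 : (1 - (x:ℂ)) = ((1 - x : ℝ) : ℂ) := by push_cast; ring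
  rw [h1, h2, h3, ← Complex.ofReal_cpow hx0, ← Complex.ofReal_cpow (by linarith),
    ← Complex.ofReal_mul]

lemma realBeta {p q : ℝ} (hp : 0 < p) (hq : 0 < q) :
    Real.Gamma p * Real.Gamma q =
      Real.Gamma (p + q) * ∫ t in (0:ℝ)..1, t ^ (p - 1) * (1 - t) ^ (q - 1) := by
  have h := Complex.Gamma_mul_Gamma_eq_betaIntegral (s := (p:ℂ)) (t := (q:ℂ))
    (by simpa using hp) (by simpa using hq)
  have hbeta : Complex.betaIntegral (p:ℂ) (q:ℂ) =
      ((∫ t in (0:ℝ)..1, t ^ (p - 1) * (1 - t) ^ (q - 1) : ℝ) : ℂ) := by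
    rw [Complex.betaIntegral, ← intervalIntegral.integral_ofReal]
    apply intervalIntegral.integral_congr
    intro x hx
    rw [Set.uIcc_of_le (by norm_num : (0:ℝ) ≤ 1)] at hx
    exact ofReal_beta_integrand p q x hx.1 hx.2
  rw [hbeta] at h
  rw [show ((p:ℂ) + (q:ℂ)) = ((p + q : ℝ) : ℂ) by push_cast; ring,
    Complex.Gamma_ofReal, Complex.Gamma_ofReal, Complex.Gamma_ofReal] at h
  exact_mod_cast h

lemma betaIntegrable {p q : ℝ} (hp : 0 < p) (hq : 0 < q) :
    IntervalIntegrable (fun t : ℝ => t ^ (p - 1) * (1 - t) ^ (q - 1)) volume 0 1 := by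
  have h := Complex.betaIntegral_convergent (u := (p:ℂ)) (v := (q:ℂ))
    (by simpa using hp) (by simpa using hq)
  rw [intervalIntegrable_iff_integrableOn_Ioc_of_le (by norm_num)] at h ⊢
  have hre : IntegrableOn (fun x : ℝ => ((x:ℂ) ^ ((p:ℂ) - 1) * (1 - (x:ℂ)) ^ ((q:ℂ) - 1)).re)
      (Set.Ioc 0 1) volume := h.re
  apply hre.congr_fun ?_ measurableSet_Ioc
  intro x hx
  show ((x:ℂ) ^ ((p:ℂ) - 1) * (1 - (x:ℂ)) ^ ((q:ℂ) - 1)).re = x ^ (p - 1) * (1 - x) ^ (q - 1)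
  rw [ofReal_beta_integrand p q x (le_of_lt hx.1) hx.2, Complex.ofReal_re]

section
variable {α p q : ℝ}

lemma gamma_binom_sum_le (hα : 1 ≤ α) (hp : 0 < p) (hq : 0 < q) (i : ℕ) :
    ∑ l ∈ Finset.range (i+1),
        (i.choose l : ℝ) * (Real.Gamma (α * l + p) * Real.Gamma (α * ((i:ℝ) - l) + q))
      ≤ Real.Gamma (α * i + (p + q)) * (Real.Gamma p * Real.Gamma q / Real.Gamma (p + q)) := by
  have hα0 : (0:ℝ) < α := lt_of_lt_of_le one_pos hα
  have hTot : (0:ℝ) < Real.Gamma (α * i + (p + q)) := Real.Gamma_pos_of_pos (by positivity)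
  have hposl : ∀ l : ℕ, l ≤ i → (0:ℝ) < α * l + p ∧ (0:ℝ) < α * ((i:ℝ) - l) + q := by
    intro l hl
    have hli : (l:ℝ) ≤ (i:ℝ) := by exact_mod_cast hl
    constructor
    · positivity
    · have : (0:ℝ) ≤ α * ((i:ℝ) - l) := mul_nonneg hα0.le (by linarith)
      linarith
  have hstep : ∀ l ∈ Finset.range (i+1),
      (i.choose l : ℝ) * (Real.Gamma (α * l + p) * Real.Gamma (α * ((i:ℝ) - l) + q))
        = Real.Gamma (α * i + (p + q)) *
          ((i.choose l : ℝ) * ∫ t in (0:ℝ)..1,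
             t ^ (α * l + p - 1) * (1 - t) ^ (α * ((i:ℝ) - l) + q - 1)) := by
    intro l hl
    obtain ⟨hpl, hql⟩ := hposl l (Nat.le_of_lt_succ (Finset.mem_range.mp hl))
    have hb := realBeta hpl hql
    rw [show α * l + p + (α * ((i:ℝ) - l) + q) = α * i + (p + q) by ring] at hb
    rw [hb]; ring
  rw [Finset.sum_congr rfl hstep, ← Finset.mul_sum]
  apply mul_le_mul_of_nonneg_left ?_ hTot.le
  -- move the constants inside and swap sum/integral
  have hswap : ∑ l ∈ Finset.range (i+1), ((i.choose l : ℝ) * ∫ t in (0:ℝ)..1,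
        t ^ (α * l + p - 1) * (1 - t) ^ (α * ((i:ℝ) - l) + q - 1))
      = ∫ t in (0:ℝ)..1, ∑ l ∈ Finset.range (i+1),
          (i.choose l : ℝ) * (t ^ (α * l + p - 1) * (1 - t) ^ (α * ((i:ℝ) - l) + q - 1)) := by
    rw [intervalIntegral.integral_finset_sum]
    · exact Finset.sum_congr rfl fun l hl => (intervalIntegral.integral_const_mul _ _).symm
    · intro l hl
      obtain ⟨hpl, hql⟩ := hposl l (Nat.le_of_lt_succ (Finset.mem_range.mp hl))
      exact (betaIntegrable hpl hql).const_mul _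
  rw [hswap]
  have hbase : Real.Gamma p * Real.Gamma q / Real.Gamma (p + q)
      = ∫ t in (0:ℝ)..1, t ^ (p - 1) * (1 - t) ^ (q - 1) := by
    rw [realBeta hp hq]
    field_simp [(Real.Gamma_pos_of_pos (by positivity : (0:ℝ) < p + q)).ne']
  rw [hbase]
  -- convert to set integrals over Ioo and compare pointwise
  rw [intervalIntegral.integral_of_le zero_le_one, intervalIntegral.integral_of_le zero_le_one,
    MeasureTheory.integral_Ioc_eq_integral_Ioo, MeasureTheory.integral_Ioc_eq_integral_Ioo]
  have hIntSum : IntegrableOn (fun t : ℝ => ∑ l ∈ Finset.range (i+1),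
      (i.choose l : ℝ) * (t ^ (α * l + p - 1) * (1 - t) ^ (α * ((i:ℝ) - l) + q - 1)))
      (Set.Ioo 0 1) volume := by
    apply MeasureTheory.integrable_finset_sum
    intro l hl
    obtain ⟨hpl, hql⟩ := hposl l (Nat.le_of_lt_succ (Finset.mem_range.mp hl))
    exact ((betaIntegrable hpl hql).const_mul ((i.choose l : ℝ))).1.mono_set
      Set.Ioo_subset_Ioc_self
  have hIntBase : IntegrableOn (fun t : ℝ => t ^ (p - 1) * (1 - t) ^ (q - 1))
      (Set.Ioo 0 1) volume :=
    (betaIntegrable hp hq).1.mono_set Set.Ioo_subset_Ioc_self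
  apply MeasureTheory.setIntegral_mono_on hIntSum hIntBase measurableSet_Ioo
  intro t ht
  obtain ⟨ht0, ht1⟩ := ht
  have h1t : (0:ℝ) < 1 - t := by linarith
  have e : ∀ l ∈ Finset.range (i+1),
      (i.choose l : ℝ) * (t ^ (α * l + p - 1) * (1 - t) ^ (α * ((i:ℝ) - l) + q - 1))
        = (t ^ (p-1) * (1-t) ^ (q-1)) * ((t ^ α) ^ l * ((1-t) ^ α) ^ (i - l) * (i.choose l : ℝ)) := by
    intro l hl
    have hli : l ≤ i := Nat.le_of_lt_succ (Finset.mem_range.mp hl)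
    have h1 : t ^ (α * l + p - 1) = (t ^ α) ^ l * t ^ (p - 1) := by
      rw [show α * (l:ℝ) + p - 1 = α * (l:ℝ) + (p - 1) by ring, Real.rpow_add ht0,
        Real.rpow_mul ht0.le, Real.rpow_natCast]
    have h2 : (1 - t) ^ (α * ((i:ℝ) - l) + q - 1) = ((1 - t) ^ α) ^ (i - l) * (1 - t) ^ (q - 1) := by
      rw [show α * ((i:ℝ) - (l:ℝ)) + q - 1 = α * (((i - l : ℕ)):ℝ) + (q - 1) by
          push_cast [Nat.cast_sub hli]; ring,
        Real.rpow_add h1t, Real.rpow_mul h1t.le, Real.rpow_natCast]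
    rw [h1, h2]; ring
  rw [Finset.sum_congr rfl e, ← Finset.mul_sum, ← add_pow]
  have hb : t ^ α + (1 - t) ^ α ≤ 1 := by
    have b1 : t ^ α ≤ t ^ (1:ℝ) := Real.rpow_le_rpow_of_exponent_ge ht0 ht1.le hα
    have b2 : (1-t) ^ α ≤ (1-t) ^ (1:ℝ) := Real.rpow_le_rpow_of_exponent_ge h1t (by linarith) hα
    rw [Real.rpow_one] at b1 b2
    linarith
  calc (t ^ (p-1) * (1-t) ^ (q-1)) * (t ^ α + (1 - t) ^ α) ^ i
      ≤ (t ^ (p-1) * (1-t) ^ (q-1)) * 1 := by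
        apply mul_le_mul_of_nonneg_left (pow_le_one₀ (by positivity) hb) (by positivity)
    _ = t ^ (p-1) * (1-t) ^ (q-1) := mul_one _

end


lemma pow_deriv (h : ℝ⟦X⟧) (L : ℕ) :
    h * (h ^ L).derivativeFun = (L : ℝ⟦X⟧) * (h.derivativeFun * h ^ L) := by
  induction L with
  | zero => simp [derivativeFun_one]
  | succ L ih =>
    rw [pow_succ, derivativeFun_mul, smul_eq_mul, smul_eq_mul]
    calc h * (h ^ L * h.derivativeFun + h * (h ^ L).derivativeFun)
        = h ^ L * h.derivativeFun * h + h * (h * (h ^ L).derivativeFun) := by ring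
      _ = h ^ L * h.derivativeFun * h
          + h * ((L : ℝ⟦X⟧) * (h.derivativeFun * h ^ L)) := by rw [ih]
      _ = ((L : ℝ⟦X⟧) + 1) * (h.derivativeFun * (h ^ L * h)) := by ring
      _ = ((L + 1 : ℕ) : ℝ⟦X⟧) * (h.derivativeFun * (h ^ L * h)) := by push_cast; ring
      _ = ((L + 1 : ℕ) : ℝ⟦X⟧) * (h.derivativeFun * h ^ (L + 1)) := by rw [← pow_succ]

lemma miller (φ : ℝ⟦X⟧) (L m : ℕ) :
    ((m:ℝ) + 1) * (coeff (R := ℝ) 0 φ) * coeff (R := ℝ) (m+1) (φ ^ L)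
      = ∑ l ∈ Finset.range (m+1),
          ((((l:ℝ)+1) * L) - ((m - l : ℕ):ℝ)) * coeff (R := ℝ) (l+1) φ * coeff (R := ℝ) (m-l) (φ ^ L) := by
  have key := congrArg (coeff (R := ℝ) m) (pow_deriv φ L)
  rw [coeff_mul, ← map_natCast (PowerSeries.C (R := ℝ)) L, coeff_C_mul, coeff_mul] at key
  simp only [show ∀ f : ℝ⟦X⟧, f.derivativeFun = derivative ℝ f from fun _ => rfl,
    coeff_derivative] at key
  rw [Finset.Nat.sum_antidiagonal_eq_sum_range_succ_mk,
    Finset.Nat.sum_antidiagonal_eq_sum_range_succ_mk] at key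
  -- key : ∑ l ∈ range (m+1), coeff l φ * (coeff (m-l+1) (φ^L) * (↑(m-l)+1))
  --     = ↑L * ∑ l ∈ range (m+1), (coeff (l+1) φ * (↑l+1)) * coeff (m-l) (φ^L)
  rw [Finset.sum_range_succ' (fun l => coeff (R := ℝ) l φ * (coeff (R := ℝ) (m-l+1) (φ ^ L) * ((m-l : ℕ) + 1 : ℝ)))]
    at key
  have hfix : ∀ l ∈ Finset.range m,
      coeff (R := ℝ) (l+1) φ * (coeff (R := ℝ) (m-(l+1)+1) (φ ^ L) * ((m-(l+1) : ℕ) + 1 : ℝ))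
        = ((m - l : ℕ):ℝ) * (coeff (R := ℝ) (l+1) φ * coeff (R := ℝ) (m-l) (φ ^ L)) := by
    intro l hl
    have hlm : l < m := Finset.mem_range.mp hl
    have e1 : m - (l+1) + 1 = m - l := by omega
    have e2 : ((m - (l+1) : ℕ) : ℝ) + 1 = ((m - l : ℕ) : ℝ) := by
      have : (m - (l+1)) + 1 = m - l := by omega
      exact_mod_cast congrArg (Nat.cast (R := ℝ)) this
    rw [e1, e2]; ring
  rw [Finset.sum_congr rfl hfix] at key
  have h2 : ∑ l ∈ Finset.range (m+1),
        ((((l:ℝ)+1) * L) - ((m - l : ℕ):ℝ)) * coeff (R := ℝ) (l+1) φ * coeff (R := ℝ) (m-l) (φ ^ L)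
      = (L:ℝ) * (∑ l ∈ Finset.range (m+1), coeff (R := ℝ) (l+1) φ * (((l:ℝ)+1)) * coeff (R := ℝ) (m-l) (φ ^ L))
        - ∑ l ∈ Finset.range (m+1), ((m - l : ℕ):ℝ) * (coeff (R := ℝ) (l+1) φ * coeff (R := ℝ) (m-l) (φ ^ L)) := by
    rw [Finset.mul_sum, ← Finset.sum_sub_distrib]
    exact Finset.sum_congr rfl fun l hl => by ring
  have h3 : ∑ l ∈ Finset.range (m+1), ((m - l : ℕ):ℝ) * (coeff (R := ℝ) (l+1) φ * coeff (R := ℝ) (m-l) (φ ^ L))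
      = ∑ l ∈ Finset.range m, ((m - l : ℕ):ℝ) * (coeff (R := ℝ) (l+1) φ * coeff (R := ℝ) (m-l) (φ ^ L)) := by
    rw [Finset.sum_range_succ, Nat.sub_self]
    simp
  rw [h2, h3]
  simp only [Nat.sub_zero, Nat.succ_eq_add_one, Prod.fst, Prod.snd] at key
  linear_combination key

section
variable (α μ rh : ℝ)

/-- the series with signed coefficients -/
noncomputable def fser : ℝ⟦X⟧ :=
  PowerSeries.mk fun l => Real.Gamma (α * ((l:ℝ) + μ)) * (-μ * rh ^ (-α)) ^ l / (Nat.factorial l : ℝ)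

/-- the series with absolute-value coefficients -/
noncomputable def Fser : ℝ⟦X⟧ :=
  PowerSeries.mk fun l => Real.Gamma (α * ((l:ℝ) + μ)) * (μ * rh ^ (-α)) ^ l / (Nat.factorial l : ℝ)

variable {α μ rh : ℝ}

lemma delta_eq (hμ : 0 < μ) (hα : 0 < α) (L : ℕ) (i : ℕ) :
    deltaCoef α μ rh L i = coeff (R := ℝ) i (fser α μ rh ^ L) := by
  have hG : Real.Gamma (α * μ) ≠ 0 := (Real.Gamma_pos_of_pos (by positivity)).ne'
  have hc0 : coeff (R := ℝ) 0 (fser α μ rh) = Real.Gamma (α * μ) := by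
    simp [fser]
  induction i using Nat.strong_induction_on with
  | _ i ih =>
    match i with
    | 0 =>
      rw [deltaCoef]
      rw [coeff_zero_eq_constantCoeff, map_pow, ← coeff_zero_eq_constantCoeff, hc0]
    | (i + 1) =>
      rw [deltaCoef]
      have hm := miller (fser α μ rh) L i
      rw [hc0] at hm
      have hsum : ∑ l ∈ Finset.range (i + 1),
          deltaCoef α μ rh L (i - l) *
            ((((l : ℝ) + 1) * (L : ℝ) + ((l : ℝ) + 1) - ((i : ℝ) + 1)) *
              Real.Gamma (α * (((l : ℝ) + 1) + μ)) *
              (-μ * rh ^ (-α)) ^ (l + 1) / (Nat.factorial (l + 1) : ℝ))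
          = ∑ l ∈ Finset.range (i + 1),
            ((((l:ℝ)+1) * L) - ((i - l : ℕ):ℝ)) * coeff (R := ℝ) (l+1) (fser α μ rh)
              * coeff (R := ℝ) (i-l) (fser α μ rh ^ L) := by
        apply Finset.sum_congr rfl
        intro l hl
        have hli : l ≤ i := Nat.le_of_lt_succ (Finset.mem_range.mp hl)
        rw [ih (i - l) (by omega)]
        have hcast : ((i - l : ℕ):ℝ) = (i:ℝ) - l := Nat.cast_sub hli
        have hGarg : α * (((l:ℝ) + 1) + μ) = α * (((l+1 : ℕ):ℝ) + μ) := by push_cast; ring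
        rw [hcast, hGarg]
        simp only [fser, coeff_mk]
        ring
      rw [hsum, ← hm]
      field_simp
end

section
variable {α μ rh : ℝ}

lemma coeff_pow_nonneg {F : ℝ⟦X⟧} (hF : ∀ n, 0 ≤ coeff (R := ℝ) n F) (L : ℕ) :
    ∀ n, 0 ≤ coeff (R := ℝ) n (F ^ L) := by
  induction L with
  | zero => intro n; rw [pow_zero, coeff_one]; split <;> norm_num
  | succ L ih =>
    intro n
    rw [pow_succ, coeff_mul]
    exact Finset.sum_nonneg fun p _ => mul_nonneg (ih p.1) (hF p.2)

lemma coeff_abs_pow_le {f F : ℝ⟦X⟧} (h : ∀ n, |coeff (R := ℝ) n f| ≤ coeff (R := ℝ) n F) (L : ℕ) :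
    ∀ n, |coeff (R := ℝ) n (f ^ L)| ≤ coeff (R := ℝ) n (F ^ L) := by
  have hF : ∀ n, 0 ≤ coeff (R := ℝ) n F := fun n => le_trans (abs_nonneg _) (h n)
  induction L with
  | zero => intro n; rw [pow_zero, pow_zero, coeff_one]; split <;> simp
  | succ L ih =>
    intro n
    rw [pow_succ, pow_succ, coeff_mul, coeff_mul]
    refine le_trans (Finset.abs_sum_le_sum_abs _ _) (Finset.sum_le_sum fun p _ => ?_)
    rw [abs_mul]
    exact mul_le_mul (ih p.1) (h p.2) (abs_nonneg _) (coeff_pow_nonneg hF L p.1)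

lemma abs_coeff_F (hμ : 0 < μ) (hrh : 0 < rh) (hα : 0 < α) (n : ℕ) :
    |coeff (R := ℝ) n (fser α μ rh)| ≤ coeff (R := ℝ) n (Fser α μ rh) := by
  simp only [fser, Fser, coeff_mk]
  rw [abs_div, abs_mul, abs_pow, abs_mul, abs_neg, abs_of_pos hμ,
    abs_of_pos (Real.rpow_pos_of_pos hrh _),
    abs_of_pos (Real.Gamma_pos_of_pos (by positivity : (0:ℝ) < α * ((n:ℝ) + μ))),
    Nat.abs_cast]

lemma claimB (hμ : 0 < μ) (hrh : 0 < rh) (hα : 1 ≤ α) (L : ℕ) (hL : 1 ≤ L) (i : ℕ) :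
    coeff (R := ℝ) i (Fser α μ rh ^ L) ≤ Real.Gamma (α * μ) ^ L * (μ * rh ^ (-α)) ^ i *
      Real.Gamma (α * i + α * μ * L) / (Real.Gamma (α * μ * L) * (Nat.factorial i : ℝ)) := by
  have hα0 : (0:ℝ) < α := lt_of_lt_of_le one_pos hα
  induction L, hL using Nat.le_induction generalizing i with
  | base =>
    rw [pow_one]
    simp only [Fser, coeff_mk]
    have h1 : α * ((i:ℝ) + μ) = α * i + α * μ := by ring
    rw [h1]
    apply le_of_eq
    have hGp : (0:ℝ) < Real.Gamma (α * μ) := Real.Gamma_pos_of_pos (by positivity)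
    have hf : (0:ℝ) < (Nat.factorial i : ℝ) := by positivity
    field_simp
    ring
  | succ L hL ih =>
    have hq : (0:ℝ) < α * μ * L := by positivity
    have hGq : (0:ℝ) < Real.Gamma (α * μ * L) := Real.Gamma_pos_of_pos hq
    have hGp : (0:ℝ) < Real.Gamma (α * μ) := Real.Gamma_pos_of_pos (by positivity)
    have hGpq : (0:ℝ) < Real.Gamma (α * μ * L + α * μ) := Real.Gamma_pos_of_pos (by positivity)
    set K := μ * rh ^ (-α) with hK
    have hK0 : 0 < K := by rw [hK]; positivity
    rw [pow_succ, coeff_mul, Finset.Nat.sum_antidiagonal_eq_sum_range_succ_mk]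
    have step1 : ∑ l ∈ Finset.range (i+1),
          coeff (R := ℝ) l (Fser α μ rh ^ L) * coeff (R := ℝ) (i - l) (Fser α μ rh)
        ≤ ∑ l ∈ Finset.range (i+1),
          (Real.Gamma (α * μ) ^ L * K ^ i / (Real.Gamma (α * μ * L) * (Nat.factorial i : ℝ))) *
            ((i.choose l : ℝ) * (Real.Gamma (α * l + α * μ * L) *
              Real.Gamma (α * ((i:ℝ) - l) + α * μ))) := by
      apply Finset.sum_le_sum
      intro l hl
      have hli : l ≤ i := Nat.le_of_lt_succ (Finset.mem_range.mp hl)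
      have hCnn : 0 ≤ coeff (R := ℝ) (i - l) (Fser α μ rh) := by
        simp only [Fser, coeff_mk]
        positivity
      refine le_trans (mul_le_mul_of_nonneg_right (ih l) hCnn) (le_of_eq ?_)
      simp only [Fser, coeff_mk]
      have hcast : ((i - l : ℕ):ℝ) = (i:ℝ) - l := Nat.cast_sub hli
      have hGarg : α * (((i - l : ℕ):ℝ) + μ) = α * ((i:ℝ) - l) + α * μ := by
        rw [hcast]; ring
      have hKsplit : K ^ l * K ^ (i - l) = K ^ i := by
        rw [← pow_add]; congr 1; omega
      have hchoose : (i.choose l : ℝ) = (Nat.factorial i : ℝ) /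
          ((Nat.factorial l : ℝ) * (Nat.factorial (i - l) : ℝ)) := Nat.cast_choose ℝ hli
      rw [hGarg, hchoose]
      field_simp
      rw [← hKsplit]
      ring
    refine le_trans step1 ?_
    rw [← Finset.mul_sum]
    have step2 := gamma_binom_sum_le (p := α * μ * L) (q := α * μ) hα hq (by positivity) i
    have hfinal : Real.Gamma (α * μ) ^ L * K ^ i / (Real.Gamma (α * μ * L) * (Nat.factorial i : ℝ))
          * (Real.Gamma (α * i + (α * μ * L + α * μ)) *
            (Real.Gamma (α * μ * L) * Real.Gamma (α * μ) / Real.Gamma (α * μ * L + α * μ)))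
        = Real.Gamma (α * μ) ^ (L+1) * K ^ i *
          Real.Gamma (α * i + α * μ * (L+1:ℕ)) / (Real.Gamma (α * μ * (L+1:ℕ)) * (Nat.factorial i : ℝ)) := by
      have e1 : α * μ * ((L+1:ℕ):ℝ) = α * μ * L + α * μ := by push_cast; ring
      have e2 : α * i + α * μ * ((L+1:ℕ):ℝ) = α * i + (α * μ * L + α * μ) := by push_cast; ring
      rw [e1]
      field_simp
      ring
    rw [← hfinal]
    apply mul_le_mul_of_nonneg_left step2 (by positivity)
end


lemma Gamma2 : Real.Gamma 2 = 1 := by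
  rw [show (2:ℝ) = 1 + 1 by norm_num, Real.Gamma_add_one one_ne_zero, Real.Gamma_one]; norm_num

lemma Gamma3 : Real.Gamma 3 = 2 := by
  rw [show (3:ℝ) = 2 + 1 by norm_num, Real.Gamma_add_one two_ne_zero, Gamma2]; norm_num

lemma one_le_Gamma_of_two_le {y : ℝ} (hy : 2 ≤ y) : 1 ≤ Real.Gamma y := by
  rcases eq_or_lt_of_le hy with h | h
  · rw [← h, Gamma2]
  · have hs := Real.convexOn_Gamma.slope_mono_adjacent (x := 1) (y := 2) (z := y)
      (by norm_num) (by simp; linarith) (by norm_num) h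
    rw [Real.Gamma_one, Gamma2] at hs
    have h3 : (0:ℝ) < y - 2 := by linarith
    by_contra h4
    push_neg at h4
    have : (Real.Gamma y - 1) / (y - 2) < 0 := div_neg_of_neg_of_pos (by linarith) h3
    norm_num at hs
    linarith

lemma sub_one_le_Gamma_of_three_le {y : ℝ} (hy : 3 ≤ y) : y - 1 ≤ Real.Gamma y := by
  rcases eq_or_lt_of_le hy with h | h
  · rw [← h, Gamma3]; norm_num
  · have hs := Real.convexOn_Gamma.slope_mono_adjacent (x := 2) (y := 3) (z := y)
      (by norm_num) (by simp; linarith) (by norm_num) h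
    rw [Gamma2, Gamma3] at hs
    have h3 : (0:ℝ) < y - 3 := by linarith
    norm_num at hs
    rw [le_div_iff₀ h3] at hs
    linarith

lemma half_lt_Gamma {x : ℝ} (hx : 0 < x) : 1/2 < Real.Gamma x := by
  by_cases h2 : 2 ≤ x
  · linarith [one_le_Gamma_of_two_le h2]
  · push_neg at h2
    have hne : x ≠ 0 := hx.ne'
    have hne1 : x + 1 ≠ 0 := by positivity
    have hg2 : Real.Gamma (x + 2) = (x + 1) * x * Real.Gamma x := by
      rw [show x + 2 = (x + 1) + 1 by ring, Real.Gamma_add_one hne1, Real.Gamma_add_one hne]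
      ring
    have hGx : 0 < Real.Gamma x := Real.Gamma_pos_of_pos hx
    by_contra hc
    push_neg at hc
    have key : (x+1) * x * Real.Gamma x ≤ (x+1) * x * (1/2) :=
      mul_le_mul_of_nonneg_left hc (by positivity)
    by_cases h1 : x < 1
    · have hg : 1 ≤ Real.Gamma (x + 2) := one_le_Gamma_of_two_le (by linarith)
      rw [hg2] at hg
      nlinarith [key, hg]
    · push_neg at h1
      have hg : (x + 2) - 1 ≤ Real.Gamma (x + 2) := sub_one_le_Gamma_of_three_le (by linarith)
      rw [hg2] at hg
      nlinarith [key, hg, mul_pos (show (0:ℝ) < x+1 by linarith) hx]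


/-- Exponential bound on the absolute sum-PDF series for α ≥ 1. -/
theorem sum_pdf_series_lt_exp_bound
    (α μ rh : ℝ) (hμ : 0 < μ) (hrh : 0 < rh) (hα : 1 ≤ α)
    (L : ℕ) (hL : 1 ≤ L) (r : ℝ) (hr : 0 < r) :
    Summable (fun i : ℕ =>
      |deltaCoef α μ rh L i| * r ^ (α * (i : ℝ) + α * μ * (L : ℝ) - 1) /
        Real.Gamma (α * (i : ℝ) + α * μ * (L : ℝ))) ∧
    (∑' i : ℕ,
        |deltaCoef α μ rh L i| * r ^ (α * (i : ℝ) + α * μ * (L : ℝ) - 1) /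
          Real.Gamma (α * (i : ℝ) + α * μ * (L : ℝ))) <
      r ^ (α * μ * (L : ℝ) - 1) * Real.Gamma (α * μ) ^ L *
        (1 / Real.Gamma ((L : ℝ) * α * μ) +
          2 * (L : ℝ) * Real.exp (μ * (r / rh) ^ α) - 2 * (L : ℝ)) := by
  have hα0 : (0:ℝ) < α := lt_of_lt_of_le one_pos hα
  have hL1 : (1:ℝ) ≤ (L:ℝ) := by exact_mod_cast hL
  have hq : 0 < α * μ * (L:ℝ) := mul_pos (mul_pos hα0 hμ) (by linarith)
  have hGq : 0 < Real.Gamma (α * μ * (L:ℝ)) := Real.Gamma_pos_of_pos hq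
  have hGp : 0 < Real.Gamma (α * μ) := Real.Gamma_pos_of_pos (by positivity)
  set c : ℝ := μ * (r / rh) ^ α with hcdef
  have hc0 : 0 < c := mul_pos hμ (Real.rpow_pos_of_pos (div_pos hr hrh) _)
  set K : ℝ := μ * rh ^ (-α) with hKdef
  have hK0 : 0 < K := mul_pos hμ (Real.rpow_pos_of_pos hrh _)
  have hKr : ∀ i : ℕ, K ^ i * r ^ (α * (i:ℝ)) = c ^ i := by
    intro i
    have h1 : r ^ (α * (i:ℝ)) = (r ^ α) ^ i := by
      rw [Real.rpow_mul hr.le, Real.rpow_natCast]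
    rw [h1, ← mul_pow]
    congr 1
    rw [hKdef, hcdef, Real.rpow_neg hrh.le, Real.div_rpow hr.le hrh.le]
    field_simp
  have habs : ∀ i : ℕ, |deltaCoef α μ rh L i| ≤
      Real.Gamma (α*μ) ^ L * K ^ i * Real.Gamma (α*(i:ℝ) + α*μ*(L:ℝ)) /
        (Real.Gamma (α*μ*(L:ℝ)) * (Nat.factorial i : ℝ)) := by
    intro i
    rw [delta_eq hμ hα0 L i]
    exact le_trans (coeff_abs_pow_le (abs_coeff_F hμ hrh hα0) L i) (claimB hμ hrh hα L hL i)
  have hGden : ∀ i : ℕ, 0 < Real.Gamma (α*(i:ℝ) + α*μ*(L:ℝ)) := fun i =>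
    Real.Gamma_pos_of_pos (by positivity)
  set A : ℝ := Real.Gamma (α*μ) ^ L * r ^ (α*μ*(L:ℝ) - 1) / Real.Gamma (α*μ*(L:ℝ)) with hAdef
  have hA0 : 0 < A := by
    rw [hAdef]
    exact div_pos (mul_pos (pow_pos hGp L) (Real.rpow_pos_of_pos hr _)) hGq
  have key : ∀ i : ℕ,
      |deltaCoef α μ rh L i| * r ^ (α * (i : ℝ) + α * μ * (L : ℝ) - 1) /
        Real.Gamma (α * (i : ℝ) + α * μ * (L : ℝ))
      ≤ A * (c ^ i / (Nat.factorial i : ℝ)) := by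
    intro i
    have hrs : r ^ (α*(i:ℝ) + α*μ*(L:ℝ) - 1) = r ^ (α*(i:ℝ)) * r ^ (α*μ*(L:ℝ) - 1) := by
      rw [← Real.rpow_add hr]; ring_nf
    have h1 : |deltaCoef α μ rh L i| * r ^ (α * (i : ℝ) + α * μ * (L : ℝ) - 1) /
        Real.Gamma (α * (i : ℝ) + α * μ * (L : ℝ))
        ≤ (Real.Gamma (α*μ) ^ L * K ^ i * Real.Gamma (α*(i:ℝ) + α*μ*(L:ℝ)) /
            (Real.Gamma (α*μ*(L:ℝ)) * (Nat.factorial i : ℝ)))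
          * r ^ (α * (i : ℝ) + α * μ * (L : ℝ) - 1) /
          Real.Gamma (α * (i : ℝ) + α * μ * (L : ℝ)) := by
      exact (div_le_div_iff_of_pos_right (hGden i)).2
        (mul_le_mul_of_nonneg_right (habs i) (Real.rpow_nonneg hr.le _))
    refine le_trans h1 (le_of_eq ?_)
    rw [hrs, hAdef, ← hKr i]
    have hfac : (0:ℝ) < (Nat.factorial i : ℝ) := by positivity
    field_simp
  have hsumu : Summable (fun i : ℕ => A * (c ^ i / (Nat.factorial i : ℝ))) :=
    (Real.summable_pow_div_factorial c).mul_left A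
  have hnn : ∀ i : ℕ, 0 ≤ |deltaCoef α μ rh L i| * r ^ (α * (i : ℝ) + α * μ * (L : ℝ) - 1) /
      Real.Gamma (α * (i : ℝ) + α * μ * (L : ℝ)) := fun i =>
    div_nonneg (mul_nonneg (abs_nonneg _) (Real.rpow_nonneg hr.le _)) (hGden i).le
  have hsum : Summable (fun i : ℕ =>
      |deltaCoef α μ rh L i| * r ^ (α * (i : ℝ) + α * μ * (L : ℝ) - 1) /
        Real.Gamma (α * (i : ℝ) + α * μ * (L : ℝ))) :=
    Summable.of_nonneg_of_le hnn key hsumu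
  refine ⟨hsum, ?_⟩
  have hexp : Real.exp c = ∑' i : ℕ, c ^ i / (Nat.factorial i : ℝ) := by
    rw [Real.exp_eq_exp_ℝ, NormedSpace.exp_eq_tsum_div]
  have htsum : (∑' i : ℕ,
      |deltaCoef α μ rh L i| * r ^ (α * (i : ℝ) + α * μ * (L : ℝ) - 1) /
        Real.Gamma (α * (i : ℝ) + α * μ * (L : ℝ))) ≤ A * Real.exp c := by
    rw [hexp, ← tsum_mul_left]
    exact Summable.tsum_le_tsum key hsum hsumu
  refine lt_of_le_of_lt htsum ?_
  rw [show (L : ℝ) * α * μ = α * μ * (L:ℝ) by ring]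
  have hE : 1 < Real.exp c := by
    have := Real.add_one_le_exp c
    linarith
  have hhalf := half_lt_Gamma hq
  have hmain : Real.exp c / Real.Gamma (α*μ*(L:ℝ)) <
      1 / Real.Gamma (α*μ*(L:ℝ)) + 2 * (L:ℝ) * Real.exp c - 2 * (L:ℝ) := by
    have h1 : 1 / Real.Gamma (α*μ*(L:ℝ)) < 2 := by
      rw [div_lt_iff₀ hGq]; linarith
    have h2 : (Real.exp c - 1) * (1 / Real.Gamma (α*μ*(L:ℝ)))
        < (Real.exp c - 1) * (2 * (L:ℝ)) := by
      apply mul_lt_mul_of_pos_left ?_ (by linarith)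
      nlinarith
    have h3 : Real.exp c / Real.Gamma (α*μ*(L:ℝ))
        = 1 / Real.Gamma (α*μ*(L:ℝ)) + (Real.exp c - 1) * (1 / Real.Gamma (α*μ*(L:ℝ))) := by
      ring
    nlinarith [h2]
  have hfin : A * Real.exp c
      = (r ^ (α*μ*(L:ℝ) - 1) * Real.Gamma (α*μ) ^ L) * (Real.exp c / Real.Gamma (α*μ*(L:ℝ))) := by
    rw [hAdef]; ring
  rw [hfin]
  exact mul_lt_mul_of_pos_left hmain
    (mul_pos (Real.rpow_pos_of_pos hr _) (pow_pos hGp L))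
end
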